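/- For every dominating family D ⊆ ω^ω there is a splitting family of the same cardinality; consequently the splitting number 𝔰 is at most the dominating number 𝔡. -/
import Mathlib


open Cardinal

/-- `f ≤* g`: eventual domination. -/
def EvDom (f g : ℕ → ℕ) : Prop := ∀ᶠ n in Filter.atTop, f n ≤ g n

/-- `D` is a dominating family. -/
def Dominating (D : Set (ℕ → ℕ)) : Prop := ∀ g : ℕ → ℕ, ∃ f ∈ D, EvDom g f

/-- `X` splits the infinite set `Y`. -/
def Splits (X Y : Set ℕ) : Prop := (Y ∩ X).Infinite ∧ (Y \ X).Infinite

/-- `S` is a splitting family. -/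
def SplittingFam (S : Set (Set ℕ)) : Prop :=
  ∀ Y : Set ℕ, Y.Infinite → ∃ X ∈ S, Splits X Y

/-- The dominating number 𝔡. -/
noncomputable def domNumber : Cardinal :=
  sInf { c | ∃ D : Set (ℕ → ℕ), Dominating D ∧ c = #D }

/-- The splitting number 𝔰. -/
noncomputable def splitNumber : Cardinal :=
  sInf { c | ∃ S : Set (Set ℕ), SplittingFam S ∧ c = #S }

/-- A strictly increasing majorant of `f`. -/
def bigF (f : ℕ → ℕ) (n : ℕ) : ℕ := (Finset.range (n + 1)).sup f + n + 1

lemma lt_bigF_self (f : ℕ → ℕ) (n : ℕ) : n < bigF f n := by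
  unfold bigF; omega

lemma f_lt_bigF (f : ℕ → ℕ) (n : ℕ) : f n < bigF f n := by
  have : f n ≤ (Finset.range (n + 1)).sup f :=
    Finset.le_sup (Finset.self_mem_range_succ n)
  unfold bigF; omega

/-- Iterates of `bigF f` starting at 0. -/
def orb (f : ℕ → ℕ) : ℕ → ℕ
  | 0 => 0
  | k + 1 => bigF f (orb f k)

lemma orb_strictMono (f : ℕ → ℕ) : StrictMono (orb f) :=
  strictMono_nat_of_lt_succ fun k => lt_bigF_self f (orb f k)

lemma le_orb (f : ℕ → ℕ) (k : ℕ) : k ≤ orb f k := by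
  induction k with
  | zero => simp [orb]
  | succ k ih => have := lt_bigF_self f (orb f k); simp only [orb]; omega

lemma orb_block_unique (f : ℕ → ℕ) {i j x : ℕ}
    (hi : orb f i ≤ x ∧ x < orb f (i + 1)) (hj : orb f j ≤ x ∧ x < orb f (j + 1)) :
    i = j := by
  by_contra h
  rcases Nat.lt_or_ge i j with hlt | hge
  · have : orb f (i + 1) ≤ orb f j := (orb_strictMono f).le_iff_le.mpr hlt
    omega
  · rcases Nat.lt_or_ge j i with hlt | hge'
    · have : orb f (j + 1) ≤ orb f i := (orb_strictMono f).le_iff_le.mpr hlt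
      omega
    · omega

/-- The splitting set associated to `f`. -/
def Xf (f : ℕ → ℕ) : Set ℕ := {n | ∃ k, orb f (2 * k) ≤ n ∧ n < orb f (2 * k + 1)}

lemma splits_of_dom {f : ℕ → ℕ} {Y : Set ℕ} (g : ℕ → ℕ)
    (hgY : ∀ n, g n ∈ Y) (hgn : ∀ n, n < g n)
    (hdom : EvDom g f) : Splits (Xf f) Y := by
  obtain ⟨N, hN⟩ := Filter.eventually_atTop.mp hdom
  -- key: for every k with orb f k ≥ N, g (orb f k) lies in the k-th block
  have key : ∀ k, N ≤ orb f k →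
      orb f k < g (orb f k) ∧ g (orb f k) < orb f (k + 1) := by
    intro k hk
    refine ⟨hgn _, ?_⟩
    have h1 : g (orb f k) ≤ f (orb f k) := hN _ hk
    have h2 := f_lt_bigF f (orb f k)
    have : orb f (k + 1) = bigF f (orb f k) := rfl
    omega
  constructor
  · rw [show Y ∩ Xf f = {n | n ∈ Y ∧ n ∈ Xf f} from rfl,
      ← Nat.frequently_atTop_iff_infinite, Filter.frequently_atTop]
    intro m
    have hMk : max N m ≤ 2 * max N m := by omega
    have hko : 2 * max N m ≤ orb f (2 * max N m) := le_orb f _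
    have hkN : N ≤ orb f (2 * max N m) :=
      le_trans (le_trans (Nat.le_max_left N m) hMk) hko
    obtain ⟨h1, h2⟩ := key (2 * max N m) hkN
    refine ⟨g (orb f (2 * max N m)), ?_, hgY _, ⟨max N m, le_of_lt h1, h2⟩⟩
    have hm : m ≤ orb f (2 * max N m) :=
      le_trans (le_trans (Nat.le_max_right N m) hMk) hko
    omega
  · rw [show Y \ Xf f = {n | n ∈ Y ∧ n ∉ Xf f} from rfl,
      ← Nat.frequently_atTop_iff_infinite, Filter.frequently_atTop]
    intro m
    have hMk : max N m ≤ 2 * max N m + 1 := by omega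
    have hko : 2 * max N m + 1 ≤ orb f (2 * max N m + 1) := le_orb f _
    have hkN : N ≤ orb f (2 * max N m + 1) :=
      le_trans (le_trans (Nat.le_max_left N m) hMk) hko
    obtain ⟨h1, h2⟩ := key (2 * max N m + 1) hkN
    refine ⟨g (orb f (2 * max N m + 1)), ?_, hgY _, ?_⟩
    · have hm : m ≤ orb f (2 * max N m + 1) :=
        le_trans (le_trans (Nat.le_max_right N m) hMk) hko
      omega
    · rintro ⟨j, hj1, hj2⟩
      have := orb_block_unique f (i := 2 * j) (j := 2 * max N m + 1)
        ⟨hj1, hj2⟩ ⟨le_of_lt h1, h2⟩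
      omega

theorem stmt0 :
    (∀ D : Set (ℕ → ℕ), Dominating D → ∃ S : Set (Set ℕ), SplittingFam S ∧ #S ≤ #D) ∧
    splitNumber ≤ domNumber := by
  have main : ∀ D : Set (ℕ → ℕ), Dominating D →
      ∃ S : Set (Set ℕ), SplittingFam S ∧ #S ≤ #D := by
    intro D hD
    refine ⟨Xf '' D, ?_, Cardinal.mk_image_le⟩
    intro Y hY
    have hg : ∀ n : ℕ, ∃ m ∈ Y, n < m := fun n => hY.exists_gt n
    choose g hgY hgn using hg
    obtain ⟨f, hfD, hdom⟩ := hD g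
    exact ⟨Xf f, Set.mem_image_of_mem _ hfD, splits_of_dom g hgY hgn hdom⟩
  refine ⟨main, ?_⟩
  have hne : { c | ∃ D : Set (ℕ → ℕ), Dominating D ∧ c = #D }.Nonempty :=
    ⟨#(Set.univ : Set (ℕ → ℕ)), Set.univ, fun g => ⟨g, Set.mem_univ g,
      Filter.Eventually.of_forall fun n => le_refl _⟩, rfl⟩
  obtain ⟨D, hD, hDc⟩ := csInf_mem hne
  obtain ⟨S, hS, hle⟩ := main D hD
  calc splitNumber ≤ #S := csInf_le' ⟨S, hS, rfl⟩
    _ ≤ #D := hle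
    _ = domNumber := hDc.symm
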